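/- Let v_n be the positive first eigenfunction of -d²/dx² + (nx)² on (-1,1) with Dirichlet boundary conditions, normalized by v_n(0) = 1. Then there is a constant c > 0 such that ‖v_n‖²_{L²(-1,1)} ≥ c · n^(-1/2) for all n ≥ 1. -/

import Mathlib

set_option maxHeartbeats 1000000

open Set Filter Topology MeasureTheory in
private lemma grushin_contDiff_two_unpack {v : ℝ → ℝ} (h : ContDiff ℝ 2 v) :
    Differentiable ℝ v ∧ Differentiable ℝ (deriv v) ∧ Continuous (deriv (deriv v)) := by
  rw [show (2 : WithTop ℕ∞) = 1 + 1 from rfl, contDiff_succ_iff_deriv] at h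
  obtain ⟨h1, -, h2⟩ := h
  rw [contDiff_one_iff_deriv] at h2
  exact ⟨h1, h2.1, h2.2⟩

open Set Filter Topology in
private lemma grushin_deriv_boundary_left {v : ℝ → ℝ} (hd : Differentiable ℝ v)
    (h0 : v (-1) = 0) (hpos : ∀ x ∈ Ioo (-1:ℝ) 1, 0 < v x) : 0 ≤ deriv v (-1) := by
  have hda := (hd (-1)).hasDerivAt
  have hs := hasDerivAt_iff_tendsto_slope.mp hda
  have hs' : Tendsto (slope v (-1)) (𝓝[>] (-1:ℝ)) (𝓝 (deriv v (-1))) :=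
    hs.mono_left (nhdsWithin_mono _ fun y hy => ne_of_gt hy)
  refine ge_of_tendsto hs' ?_
  filter_upwards [Ioo_mem_nhdsGT_of_mem (by norm_num : (-1:ℝ) ∈ Ico (-1:ℝ) 1)] with y hy
  have h2 : 0 < v y := hpos y hy
  rw [slope_def_field, h0, sub_zero]
  have h3 : (0:ℝ) < y - -1 := by linarith [hy.1]
  positivity

open Set Filter Topology in
private lemma grushin_deriv_boundary_right {v : ℝ → ℝ} (hd : Differentiable ℝ v)
    (h0 : v 1 = 0) (hpos : ∀ x ∈ Ioo (-1:ℝ) 1, 0 < v x) : deriv v 1 ≤ 0 := by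
  have hda := (hd 1).hasDerivAt
  have hs := hasDerivAt_iff_tendsto_slope.mp hda
  have hs' : Tendsto (slope v 1) (𝓝[<] (1:ℝ)) (𝓝 (deriv v 1)) :=
    hs.mono_left (nhdsWithin_mono _ fun y hy => ne_of_lt hy)
  refine le_of_tendsto hs' ?_
  filter_upwards [Ioo_mem_nhdsLT_of_mem (by norm_num : (1:ℝ) ∈ Ioc (-1:ℝ) 1)] with y hy
  have h2 : 0 < v y := hpos y hy
  rw [slope_def_field, h0, sub_zero]
  have h3 : y - 1 < 0 := by linarith [hy.2]
  exact div_nonpos_of_nonneg_of_nonpos h2.le h3.le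

open Set Filter Topology in
/-- Sturm comparison with the Gaussian `e^{-n x²/2}` shows that a positive Dirichlet
eigenfunction of `-d²/dx² + (nx)²` on `(-1,1)` has eigenvalue at least `n`. -/
private lemma grushin_eigen_lower (n : ℕ) (lam : ℝ) (v : ℝ → ℝ)
    (hC2 : ContDiff ℝ 2 v) (hbm : v (-1) = 0) (hbp : v 1 = 0)
    (hpos : ∀ x ∈ Ioo (-1:ℝ) 1, 0 < v x)
    (hODE : ∀ x ∈ Ioo (-1:ℝ) 1, -(deriv (deriv v) x) + ((n:ℝ)*x)^2 * v x = lam * v x) :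
    (n:ℝ) ≤ lam := by
  by_contra hlt
  push_neg at hlt
  obtain ⟨hd1, hd2, hc2⟩ := grushin_contDiff_two_unpack hC2
  set w : ℝ → ℝ := fun x => Real.exp (-(n:ℝ) * x^2 / 2) with hwdef
  have hwpos : ∀ x, 0 < w x := fun x => Real.exp_pos _
  have hwd : ∀ x : ℝ, HasDerivAt w (-(n:ℝ) * x * w x) x := by
    intro x
    have h1 : HasDerivAt (fun x : ℝ => -(n:ℝ) * x^2 / 2) (-(n:ℝ) * x) x := by
      have := ((hasDerivAt_pow 2 x).const_mul (-(n:ℝ))).div_const 2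
      exact this.congr_deriv (by push_cast; ring)
    have := h1.exp
    convert this using 1
    rw [hwdef]; ring
  set W : ℝ → ℝ := fun x => deriv v x * w x + (n:ℝ) * x * (v x * w x) with hWdef
  have hWd : ∀ x ∈ Ioo (-1:ℝ) 1, HasDerivAt W (((n:ℝ) - lam) * (v x * w x)) x := by
    intro x hx
    have hv'' : deriv (deriv v) x = ((n:ℝ)*x)^2 * v x - lam * v x := by
      have := hODE x hx; linarith
    have h1 : HasDerivAt (fun y => deriv v y * w y)
        (deriv (deriv v) x * w x + deriv v x * (-(n:ℝ) * x * w x)) x :=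
      ((hd2 x).hasDerivAt).mul (hwd x)
    have h2 : HasDerivAt (fun y => (n:ℝ) * y * (v y * w y))
        ((n:ℝ) * (v x * w x) + (n:ℝ) * x * (deriv v x * w x + v x * (-(n:ℝ) * x * w x))) x := by
      have ha : HasDerivAt (fun y : ℝ => (n:ℝ) * y) ((n:ℝ)) x := by
        simpa using (hasDerivAt_id x).const_mul (n:ℝ)
      have hb : HasDerivAt (fun y => v y * w y) (deriv v x * w x + v x * (-(n:ℝ) * x * w x)) x :=
        ((hd1 x).hasDerivAt).mul (hwd x)
      exact ha.mul hb
    have := h1.add h2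
    exact this.congr_deriv (by rw [hv'']; ring)
  have hmono : StrictMonoOn W (Icc (-1:ℝ) 1) := by
    apply strictMonoOn_of_deriv_pos (convex_Icc _ _)
    · have : Continuous W := by
        apply Continuous.add
        · exact (hd2.continuous).mul (Real.continuous_exp.comp (by continuity))
        · exact (continuous_const.mul continuous_id).mul
            ((hd1.continuous).mul (Real.continuous_exp.comp (by continuity)))
      exact this.continuousOn
    · intro x hx
      rw [interior_Icc] at hx
      rw [(hWd x hx).deriv]
      have := hpos x hx
      have := hwpos x
      have : (0:ℝ) < (n:ℝ) - lam := by linarith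
      positivity
  have hlt2 : W (-1) < W 1 := hmono (by norm_num) (by norm_num) (by norm_num)
  have hW1 : W 1 = deriv v 1 * w 1 + (n:ℝ) * 1 * (v 1 * w 1) := rfl
  have hWm : W (-1) = deriv v (-1) * w (-1) + (n:ℝ) * (-1) * (v (-1) * w (-1)) := rfl
  rw [hbp] at hW1; rw [hbm] at hWm
  have e1 : W 1 = deriv v 1 * w 1 := by rw [hW1]; ring
  have e2 : W (-1) = deriv v (-1) * w (-1) := by rw [hWm]; ring
  have b1 : deriv v 1 ≤ 0 := grushin_deriv_boundary_right hd1 hbp hpos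
  have b2 : 0 ≤ deriv v (-1) := grushin_deriv_boundary_left hd1 hbm hpos
  have p1 : W 1 ≤ 0 := by rw [e1]; exact mul_nonpos_of_nonpos_of_nonneg b1 (hwpos 1).le
  have p2 : 0 ≤ W (-1) := by rw [e2]; exact mul_nonneg b2 (hwpos (-1)).le
  linarith

/-- `IsGrushinGroundState n lam v` : `v` is an eigenfunction of `-d²/dx² + (n x)²` on `(-1,1)`
with Dirichlet boundary conditions, positive on `(-1,1)`, associated with the smallest
eigenvalue `lam`. -/
def IsGrushinGroundState (n : ℕ) (lam : ℝ) (v : ℝ → ℝ) : Prop :=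
  ContDiff ℝ 2 v ∧ v (-1) = 0 ∧ v 1 = 0 ∧
    (∀ x ∈ Set.Ioo (-1 : ℝ) 1, 0 < v x) ∧
    (∀ x ∈ Set.Ioo (-1 : ℝ) 1,
      -(deriv (deriv v) x) + ((n : ℝ) * x) ^ 2 * v x = lam * v x) ∧
    (∀ μ : ℝ, (∃ w : ℝ → ℝ, ContDiff ℝ 2 w ∧ w (-1) = 0 ∧ w 1 = 0 ∧
        (∃ x ∈ Set.Ioo (-1 : ℝ) 1, w x ≠ 0) ∧
        ∀ x ∈ Set.Ioo (-1 : ℝ) 1,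
          -(deriv (deriv w) x) + ((n : ℝ) * x) ^ 2 * w x = μ * w x) → lam ≤ μ)

open Set Filter Topology MeasureTheory in
/-- If `v_n` is the positive first Dirichlet eigenfunction of `-d²/dx² + (nx)²` on `(-1,1)`
normalized by `v_n(0) = 1`, then `‖v_n‖²_{L²(-1,1)} ≥ c n^{-1/2}` for some `c > 0`. -/
theorem grushin_ground_state_l2_lower_bound (lam : ℕ → ℝ) (v : ℕ → ℝ → ℝ)
    (h : ∀ n : ℕ, 1 ≤ n → IsGrushinGroundState n (lam n) (v n))
    (h_norm : ∀ n : ℕ, 1 ≤ n → v n 0 = 1) :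
    ∃ c : ℝ, 0 < c ∧ ∀ n : ℕ, 1 ≤ n →
      c * (n : ℝ) ^ (-(1 : ℝ) / 2) ≤ ∫ x in Set.Ioo (-1 : ℝ) 1, (v n x) ^ 2 := by
  refine ⟨1/8, by norm_num, ?_⟩
  intro n hn
  obtain ⟨hC2, hbm, hbp, hpos, hODE, -⟩ := h n hn
  obtain ⟨hd1, hd2, hc2⟩ := grushin_contDiff_two_unpack hC2
  have hn0 : (0:ℝ) < n := by exact_mod_cast hn
  have hlam : (n:ℝ) ≤ lam n := grushin_eigen_lower n (lam n) (v n) hC2 hbm hbp hpos hODE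
  set s := Real.sqrt n with hsdef
  have hs1 : 1 ≤ s := Real.one_le_sqrt.mpr (by exact_mod_cast hn)
  have hs0 : 0 < s := lt_of_lt_of_le one_pos hs1
  have hssq : s^2 = n := Real.sq_sqrt hn0.le
  set b : ℝ := 1/(2*s) with hbdef
  have hb0 : 0 < b := by positivity
  have hbhalf : b ≤ 1/2 := by
    rw [hbdef]
    rw [div_le_div_iff₀ (by positivity) (by norm_num)]
    linarith
  have hbsq : b^2 = 1/(4*(n:ℝ)) := by
    rw [hbdef, div_pow, mul_pow, hssq]; norm_num
  have hsub : Icc (-b) b ⊆ Ioo (-1:ℝ) 1 := by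
    intro x hx
    exact ⟨by linarith [hx.1], by linarith [hx.2]⟩
  -- concavity of `v n` on `[-b, b]`
  have hconc : ConcaveOn ℝ (Icc (-b) b) (v n) := by
    apply concaveOn_of_deriv2_nonpos (convex_Icc _ _) hd1.continuous.continuousOn
      hd1.differentiableOn hd2.differentiableOn
    intro x hx
    rw [interior_Icc] at hx
    show deriv (deriv (v n)) x ≤ 0
    have hxI : x ∈ Ioo (-1:ℝ) 1 := hsub ⟨hx.1.le, hx.2.le⟩
    have hODEx := hODE x hxI
    have hvx := hpos x hxI
    have hx2 : x^2 < b^2 := by nlinarith [hx.1, hx.2]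
    have hcoef : 0 < lam n - ((n:ℝ)*x)^2 := by
      rw [hbsq] at hx2
      have hexp : ((n:ℝ)*x)^2 = (n:ℝ)^2 * x^2 := by ring
      rw [hexp]
      have hmul := mul_lt_mul_of_pos_left hx2 (show (0:ℝ) < (n:ℝ)^2 by positivity)
      have hn4 : (n:ℝ)^2 * (1/(4*(n:ℝ))) = (n:ℝ)/4 := by field_simp
      rw [hn4] at hmul
      linarith
    have hD : deriv (deriv (v n)) x = (((n:ℝ)*x)^2 - lam n) * v n x := by
      linear_combination -hODEx
    rw [hD]
    nlinarith [mul_pos hvx hcoef]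
  -- pointwise lower bound on `[-b/2, b/2]`
  have hv0 : v n 0 = 1 := h_norm n hn
  have hpt : ∀ x ∈ Icc (-(b/2)) (b/2), 1/2 ≤ v n x := by
    intro x hx
    have h0mem : (0:ℝ) ∈ Icc (-b) b := ⟨by linarith, hb0.le⟩
    rcases le_or_gt 0 x with hx0 | hx0
    · have hbmem : b ∈ Icc (-b) b := ⟨by linarith, le_rfl⟩
      have htb : 0 ≤ x/b := div_nonneg hx0 hb0.le
      have hxb : x/b ≤ 1/2 := by rw [div_le_iff₀ hb0]; linarith [hx.2]
      have ht0 : 0 ≤ 1 - x/b := by linarith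
      have hcomb := hconc.2 h0mem hbmem ht0 htb (by ring)
      have hxeq : (1 - x/b) • (0:ℝ) + (x/b) • b = x := by
        simp only [smul_eq_mul]
        field_simp; ring
      rw [hxeq] at hcomb
      simp only [smul_eq_mul, hv0] at hcomb
      have hvb : 0 < v n b := hpos b (hsub ⟨by linarith, le_rfl⟩)
      nlinarith [mul_nonneg htb hvb.le]
    · have hbmem : -b ∈ Icc (-b) b := ⟨le_rfl, by linarith⟩
      have htb : 0 ≤ -x/b := div_nonneg (by linarith) hb0.le
      have hxb : -x/b ≤ 1/2 := by rw [div_le_iff₀ hb0]; linarith [hx.1]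
      have ht0 : 0 ≤ 1 - -x/b := by linarith
      have hcomb := hconc.2 h0mem hbmem ht0 htb (by ring)
      have hxeq : (1 - -x/b) • (0:ℝ) + (-x/b) • (-b) = x := by
        simp only [smul_eq_mul]
        field_simp; ring
      rw [hxeq] at hcomb
      simp only [smul_eq_mul, hv0] at hcomb
      have hvb : 0 < v n (-b) := hpos (-b) (hsub ⟨le_rfl, by linarith⟩)
      nlinarith [mul_nonneg htb hvb.le]
  -- integral estimates
  have hcont2 : Continuous (fun x => (v n x)^2) := hd1.continuous.pow 2
  have hInt : IntegrableOn (fun x => (v n x)^2) (Ioo (-1:ℝ) 1) :=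
    ((hcont2.continuousOn).integrableOn_compact isCompact_Icc).mono_set Ioo_subset_Icc_self
  have hsub2 : Ioo (-(b/2)) (b/2) ⊆ Ioo (-1:ℝ) 1 := by
    intro x hx
    exact ⟨by linarith [hx.1], by linarith [hx.2]⟩
  have step1 : (∫ x in Ioo (-(b/2)) (b/2), (v n x)^2) ≤ ∫ x in Ioo (-1:ℝ) 1, (v n x)^2 :=
    setIntegral_mono_set hInt (Eventually.of_forall fun x => sq_nonneg _)
      (HasSubset.Subset.eventuallyLE hsub2)
  have step2 : (∫ _x in Ioo (-(b/2)) (b/2), (1/4:ℝ)) ≤ ∫ x in Ioo (-(b/2)) (b/2), (v n x)^2 := by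
    apply setIntegral_mono_on
    · exact (integrableOn_const_iff).mpr (Or.inr measure_Ioo_lt_top)
    · exact hInt.mono_set hsub2
    · exact measurableSet_Ioo
    · intro x hx
      have := hpt x ⟨hx.1.le, hx.2.le⟩
      nlinarith
  have hval : (∫ _x in Ioo (-(b/2)) (b/2), (1/4:ℝ)) = b/4 := by
    rw [setIntegral_const, Real.volume_real_Ioo_of_le (by linarith : -(b/2) ≤ b/2), smul_eq_mul]
    ring
  have hr : (n:ℝ) ^ (-(1:ℝ)/2) = s⁻¹ := by
    rw [neg_div, Real.rpow_neg hn0.le, ← Real.sqrt_eq_rpow]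
  rw [hr]
  have hfin : (1/8:ℝ) * s⁻¹ = b/4 := by
    rw [hbdef]; field_simp; ring
  linarith
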